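/- For every n > 0 and every m ≥ n, every configuration γ reachable in F_n from ⟨s_0^m, 0⟩ satisfies γ →* ⟨s_0^{n−1} + s_n^{m−n+1}, n−1⟩; in particular, Post*({⟨s_0^m, 0⟩}) ⊆ Pre*([s_n]), i.e., from every reachable configuration a configuration containing s_n is reachable. -/

import Mathlib

/-- Operation type of a register protocol: read or write. -/
inductive Op : Type
  | R : Op
  | W : Op
deriving DecidableEq

instance : Fintype Op :=
  ⟨{Op.R, Op.W}, fun x => by cases x <;> simp⟩

/-- A location has at least one outgoing transition. -/
def Nonblock {Q D : Type*} (T : Set (Q × Op × D × Q)) : Prop :=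
  ∀ q : Q, ∃ op d q', (q, op, d, q') ∈ T

/-- Whenever a read transition exists from `q`, reads of every datum are enabled in `q`. -/
def ReadTotal {Q D : Type*} (T : Set (Q × Op × D × Q)) : Prop :=
  ∀ q d' q', (q, Op.R, d', q') ∈ T → ∀ d : D, ∃ qd, (q, Op.R, d, qd) ∈ T

/-- One step of the distributed system associated with transition set `T`:
a configuration is a pair of a finite multiset of locations and a register datum. -/
def IsStep {Q D : Type*} [DecidableEq Q] (T : Set (Q × Op × D × Q)) :
    Multiset Q × D → Multiset Q × D → Prop := fun γ γ' =>
  ∃ q op d'' q', (q, op, d'', q') ∈ T ∧ q ∈ γ.1 ∧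
    γ'.1 = γ.1 - {q} + {q'} ∧
    ((op = Op.R ∧ γ.2 = d'' ∧ γ'.2 = d'') ∨ (op = Op.W ∧ γ'.2 = d''))

/-- Reachability: reflexive-transitive closure of the step relation. -/
def Reach {Q D : Type*} [DecidableEq Q] (T : Set (Q × Op × D × Q)) :
    Multiset Q × D → Multiset Q × D → Prop :=
  Relation.ReflTransGen (IsStep T)

/-- `PostStar T S` is the set of configurations reachable from some configuration of `S`. -/
def PostStar {Q D : Type*} [DecidableEq Q] (T : Set (Q × Op × D × Q))
    (S : Set (Multiset Q × D)) : Set (Multiset Q × D) :=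
  {γ' | ∃ γ ∈ S, Reach T γ γ'}

/-- `PreStar T S` is the set of configurations from which some configuration of `S`
is reachable. -/
def PreStar {Q D : Type*} [DecidableEq Q] (T : Set (Q × Op × D × Q))
    (S : Set (Multiset Q × D)) : Set (Multiset Q × D) :=
  {γ | ∃ γ' ∈ S, Reach T γ γ'}

/-- `[qf]`: configurations containing at least one process in location `qf`. -/
def TargetSet {Q D : Type*} [DecidableEq Q] (qf : Q) : Set (Multiset Q × D) :=
  {γ | 0 < γ.1.count qf}

/-- The order `⪯` on configurations: same register content, same support,
and componentwise smaller multiset. -/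
def ConfLE {Q D : Type*} [DecidableEq Q] (γ γ' : Multiset Q × D) : Prop :=
  γ.2 = γ'.2 ∧ γ.1.toFinset = γ'.1.toFinset ∧ γ.1 ≤ γ'.1

/-- Upward closure of a set of configurations with respect to `⪯`. -/
def UpSet {Q D : Type*} [DecidableEq Q] (B : Set (Multiset Q × D)) :
    Set (Multiset Q × D) :=
  {γ' | ∃ γ ∈ B, ConfLE γ γ'}

/-- Transitions of the filter protocol `F_n` (for `n > 0`): locations
`s_0, …, s_n` are `Fin (n+1)`, data `0, …, n−1` are `Fin n`. Transitions:
`(s_0, W, 0, s_0)`; `(s_i, R, i, s_{i+1})` for `0 ≤ i ≤ n−1`;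
`(s_i, W, i, s_0)` for `1 ≤ i ≤ n−1`; and read self-loops `(s, R, d, s)` for
every pair `(s, d)` for which no other read transition is specified. -/
def FilterT (n : ℕ) : Set (Fin (n + 1) × Op × Fin n × Fin (n + 1)) := fun t =>
  match t with
  | (s, Op.W, d, s') =>
      ((s : ℕ) = 0 ∧ (d : ℕ) = 0 ∧ (s' : ℕ) = 0) ∨
      (1 ≤ (s : ℕ) ∧ (s : ℕ) ≤ n - 1 ∧ (d : ℕ) = (s : ℕ) ∧ (s' : ℕ) = 0)
  | (s, Op.R, d, s') =>
      ((s : ℕ) ≤ n - 1 ∧ (d : ℕ) = (s : ℕ) ∧ (s' : ℕ) = (s : ℕ) + 1) ∨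
      (¬ ((s : ℕ) ≤ n - 1 ∧ (d : ℕ) = (s : ℕ)) ∧ s' = s)

namespace S14
open Multiset

variable {n : ℕ}

/-- Location `s_i` (clamped). -/
def L (n i : ℕ) : Fin (n + 1) := ⟨min i n, by omega⟩

/-- Register value `d` (clamped). -/
def Rg (n : ℕ) (hn : 0 < n) (d : ℕ) : Fin n := ⟨min d (n - 1), by omega⟩

@[simp] lemma L_val {i : ℕ} (h : i ≤ n) : ((L n i : Fin (n+1)) : ℕ) = i := by
  simp [L, Nat.min_eq_left (by omega : i ≤ n)]

@[simp] lemma Rg_val {hn : 0 < n} {d : ℕ} (h : d ≤ n - 1) : ((Rg n hn d : Fin n) : ℕ) = d := by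
  simp [Rg, Nat.min_eq_left h]

lemma sub_add_helper (a b : Fin (n+1)) (C : Multiset (Fin (n+1))) :
    ({a} + C) - {a} + {b} = {b} + C := by
  rw [add_tsub_cancel_left]; exact add_comm C {b}

/-- generic one-step lemma -/
lemma step_gen {q q' : Fin (n+1)} {op : Op} {d'' : Fin n} (C : Multiset (Fin (n+1))) (d : Fin n)
    (hT : (q, op, d'', q') ∈ FilterT n)
    (hop : (op = Op.R ∧ d = d'') ∨ op = Op.W) :
    IsStep (FilterT n) ({q} + C, d) ({q'} + C, d'') := by
  refine ⟨q, op, d'', q', hT, by simp, (sub_add_helper q q' C).symm, ?_⟩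
  rcases hop with ⟨h1, h2⟩ | h1
  · exact Or.inl ⟨h1, h2, rfl⟩
  · exact Or.inr ⟨h1, rfl⟩

lemma step_w0 (hn : 0 < n) (C : Multiset (Fin (n+1))) (d : Fin n) :
    IsStep (FilterT n) ({L n 0} + C, d) ({L n 0} + C, Rg n hn 0) := by
  refine step_gen C d ?_ (Or.inr rfl)
  exact Or.inl ⟨by simp, by simp, by simp⟩

lemma step_wi (hn : 0 < n) {i : ℕ} (h1 : 1 ≤ i) (h2 : i ≤ n - 1)
    (C : Multiset (Fin (n+1))) (d : Fin n) :
    IsStep (FilterT n) ({L n i} + C, d) ({L n 0} + C, Rg n hn i) := by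
  refine step_gen C d ?_ (Or.inr rfl)
  exact Or.inr ⟨by rw [L_val (by omega)]; omega, by rw [L_val (by omega)]; omega,
    by rw [L_val (by omega), Rg_val h2], by simp⟩

lemma step_ri (hn : 0 < n) {i : ℕ} (h2 : i ≤ n - 1) (C : Multiset (Fin (n+1))) :
    IsStep (FilterT n) ({L n i} + C, Rg n hn i) ({L n (i+1)} + C, Rg n hn i) := by
  refine step_gen C _ ?_ (Or.inl ⟨rfl, rfl⟩)
  exact Or.inl ⟨by rw [L_val (by omega)]; exact h2, by rw [L_val (by omega), Rg_val h2],
    by rw [L_val (by omega), L_val (by omega)]⟩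

end S14
namespace S14
open Multiset

variable {n : ℕ}

lemma rep_succ_eq (a : Fin (n+1)) (k : ℕ) (C : Multiset (Fin (n+1))) :
    replicate (k+1) a + C = {a} + (replicate k a + C) := by
  rw [replicate_succ, ← singleton_add, add_assoc]

lemma rep_succ_eq' (a : Fin (n+1)) (k : ℕ) (C : Multiset (Fin (n+1))) :
    replicate (k+1) a + C = replicate k a + ({a} + C) := by
  rw [replicate_succ, ← singleton_add]; abel

lemma swap_ctx (a : Fin (n+1)) (s C : Multiset (Fin (n+1))) :
    {a} + (s + C) = s + ({a} + C) := by abel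

lemma moveup (hn : 0 < n) {i : ℕ} (h2 : i ≤ n - 1) (k : ℕ) (C : Multiset (Fin (n+1))) :
    Reach (FilterT n) (replicate k (L n i) + C, Rg n hn i)
      (replicate k (L n (i+1)) + C, Rg n hn i) := by
  induction k generalizing C with
  | zero => exact .refl
  | succ k ih =>
    rw [rep_succ_eq, rep_succ_eq' (L n (i+1))]
    refine Relation.ReflTransGen.head (step_ri hn h2 _) ?_
    rw [swap_ctx]
    exact ih ({L n (i+1)} + C)

lemma dropall (hn : 0 < n) {i : ℕ} (h2 : i ≤ n - 1) (k : ℕ) (C : Multiset (Fin (n+1))) :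
    Reach (FilterT n) (replicate k (L n i) + C, Rg n hn i)
      (replicate k (L n 0) + C, Rg n hn i) := by
  rcases Nat.eq_zero_or_pos i with h0 | h1
  · subst h0; exact .refl
  · induction k generalizing C with
    | zero => exact .refl
    | succ k ih =>
      rw [rep_succ_eq, rep_succ_eq' (L n 0)]
      refine Relation.ReflTransGen.head (step_wi hn h1 h2 _ _) ?_
      rw [swap_ctx]
      exact ih ({L n 0} + C)

lemma raise_aux (hn : 0 < n) : ∀ (t i k : ℕ) (C : Multiset (Fin (n+1))),
    i ≤ n - 1 → n - 1 - i ≤ k → n - 1 - i = t →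
    Reach (FilterT n) (replicate k (L n i) + C, Rg n hn i)
      (replicate k (L n 0) + C, Rg n hn (n-1)) := by
  intro t
  induction t with
  | zero =>
    intro i k C hi hk ht
    have hieq : i = n - 1 := by omega
    subst hieq
    exact dropall hn le_rfl k C
  | succ t ih =>
    intro i k C hi hk ht
    obtain ⟨k', rfl⟩ : ∃ k', k = k' + 1 := ⟨k - 1, by omega⟩
    refine (moveup hn (by omega : i ≤ n - 1) (k'+1) C).trans ?_
    rw [rep_succ_eq]
    refine Relation.ReflTransGen.head (step_wi hn (by omega) (by omega : i+1 ≤ n-1) _ _) ?_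
    rw [swap_ctx]
    rw [rep_succ_eq' (L n 0) k' C]
    exact ih (i+1) k' ({L n 0} + C) (by omega) (by omega) (by omega)

lemma climb (hn : 0 < n) : ∀ (t i k : ℕ) (C : Multiset (Fin (n+1))),
    i ≤ n - 1 → n - i ≤ k → n - 1 - i = t →
    Reach (FilterT n) (replicate k (L n i) + C, Rg n hn i)
      (replicate (k-1) (L n 0) + ({L n n} + C), Rg n hn (n-1)) := by
  intro t
  induction t with
  | zero =>
    intro i k C hi hk ht
    have hieq : i = n - 1 := by omega
    subst hieq
    obtain ⟨k', rfl⟩ : ∃ k', k = k' + 1 := ⟨k - 1, by omega⟩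
    rw [rep_succ_eq]
    have hL : L n (n - 1 + 1) = L n n := by
      have : n - 1 + 1 = n := by omega
      rw [this]
    refine Relation.ReflTransGen.head (step_ri hn le_rfl _) ?_
    rw [hL, swap_ctx]
    have := dropall hn (le_rfl : n - 1 ≤ n - 1) k' ({L n n} + C)
    simpa [Nat.add_sub_cancel, swap_ctx, Reach] using this
  | succ t ih =>
    intro i k C hi hk ht
    obtain ⟨k', rfl⟩ : ∃ k', k = k' + 1 := ⟨k - 1, by omega⟩
    refine (moveup hn (by omega : i ≤ n - 1) (k'+1) C).trans ?_
    rw [rep_succ_eq]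
    refine Relation.ReflTransGen.head (step_wi hn (by omega) (by omega : i+1 ≤ n-1) _ _) ?_
    rw [swap_ctx]
    have hrec := ih (i+1) k' ({L n 0} + C) (by omega) (by omega) (by omega)
    refine hrec.trans ?_
    -- endpoint: rep (k'-1) L0 + ({Lnn} + ({L0}+C)) = rep (k'+1-1) L0 + ({Lnn}+C)
    have hk1 : 1 ≤ k' := by omega
    obtain ⟨k'', rfl⟩ : ∃ k'', k' = k'' + 1 := ⟨k' - 1, by omega⟩
    have e : replicate (k''+1-1) (L n 0) + ({L n n} + ({L n 0} + C))
        = replicate (k''+1+1-1) (L n 0) + ({L n n} + C) := by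
      simp only [Nat.add_sub_cancel]
      rw [rep_succ_eq' (L n 0) k'']
      abel
    rw [e]

lemma push (hn : 0 < n) (k : ℕ) (C : Multiset (Fin (n+1))) (d : Fin n) (hk : n ≤ k) :
    Reach (FilterT n) (replicate k (L n 0) + C, d)
      (replicate (k-1) (L n 0) + ({L n n} + C), Rg n hn (n-1)) := by
  obtain ⟨k', rfl⟩ : ∃ k', k = k' + 1 := ⟨k - 1, by omega⟩
  rw [rep_succ_eq]
  refine Relation.ReflTransGen.head (step_w0 hn _ d) ?_
  rw [← rep_succ_eq]
  exact climb hn (n-1) 0 (k'+1) C (by omega) (by omega) rfl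

lemma raise (hn : 0 < n) (k : ℕ) (C : Multiset (Fin (n+1))) (d : Fin n) (hk : n - 1 ≤ k) :
    Reach (FilterT n) (replicate k (L n 0) + C, d)
      (replicate k (L n 0) + C, Rg n hn (n-1)) := by
  rcases Nat.lt_or_ge n 2 with h2 | h2
  · have hn1 : n = 1 := by omega
    subst hn1
    have hd : d = Rg 1 hn (1-1) := Subsingleton.elim d _
    rw [hd]; exact .refl
  · obtain ⟨k', rfl⟩ : ∃ k', k = k' + 1 := ⟨k - 1, by omega⟩
    rw [rep_succ_eq]
    refine Relation.ReflTransGen.head (step_w0 hn _ d) ?_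
    rw [← rep_succ_eq]
    exact raise_aux hn (n-1) 0 (k'+1) C (by omega) (by omega) rfl

lemma multipush (hn : 0 < n) : ∀ (j : ℕ) (C : Multiset (Fin (n+1))) (d : Fin n),
    Reach (FilterT n) (replicate (n-1+j) (L n 0) + C, d)
      (replicate (n-1) (L n 0) + (replicate j (L n n) + C), Rg n hn (n-1)) := by
  intro j
  induction j with
  | zero => intro C d; simpa using raise hn (n-1) C d le_rfl
  | succ j ih =>
    intro C d
    have r1 := push hn (n-1+(j+1)) C d (by omega)
    have e1 : n - 1 + (j+1) - 1 = n - 1 + j := by omega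
    rw [e1] at r1
    refine r1.trans ?_
    have r2 := ih ({L n n} + C) (Rg n hn (n-1))
    refine r2.trans ?_
    have e2 : replicate (n-1) (L n 0) + (replicate j (L n n) + ({L n n} + C))
        = replicate (n-1) (L n 0) + (replicate (j+1) (L n n) + C) := by
      rw [rep_succ_eq' (L n n) j C]
    rw [e2]

end S14
namespace S14
open Multiset

variable {n : ℕ}

lemma mk_eq_L {i : ℕ} (h : i < n + 1) : (⟨i, h⟩ : Fin (n+1)) = L n i := by
  have : min i n = i := by omega
  simp [L, this]

lemma last_eq_L : Fin.last n = L n n := by simp [Fin.last, L]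

lemma mk_eq_Rg (hn : 0 < n) {d : ℕ} (h : d < n) : (⟨d, h⟩ : Fin n) = Rg n hn d := by
  have : min d (n-1) = d := by omega
  simp [Rg, this]

/-- number of processes in intermediate locations -/
def mid (n : ℕ) (μ : Multiset (Fin (n+1))) : ℕ :=
  Multiset.card (μ.filter (fun q => ¬ q = L n 0 ∧ ¬ q = L n n))

lemma flat_eq (hn : 0 < n) (μ : Multiset (Fin (n+1))) (hmid : mid n μ = 0) :
    μ = replicate (Multiset.card μ - μ.count (L n n)) (L n 0)
        + replicate (μ.count (L n n)) (L n n) := by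
  have hall : ∀ q ∈ μ, q = L n 0 ∨ q = L n n := by
    intro q hq
    by_contra hc
    push_neg at hc
    have h0 : μ.filter (fun q => ¬ q = L n 0 ∧ ¬ q = L n n) = 0 :=
      Multiset.card_eq_zero.mp hmid
    exact (Multiset.filter_eq_nil.mp h0 q hq) ⟨hc.1, hc.2⟩
  have hsplit := Multiset.filter_add_not (fun q => L n 0 = q) μ
  have h1 : μ.filter (fun q => L n 0 = q) = replicate (μ.count (L n 0)) (L n 0) :=
    Multiset.filter_eq μ (L n 0)
  have hcong : μ.filter (fun q => ¬ L n 0 = q) = μ.filter (fun q => L n n = q) := by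
    apply Multiset.filter_congr
    intro x hx
    have hne : L n 0 ≠ L n n := by
      intro h
      have := congrArg Fin.val h
      rw [L_val (Nat.zero_le n), L_val le_rfl] at this
      omega
    rcases hall x hx with rfl | rfl
    · simp [hne.symm]  -- x = L n 0 : LHS ¬ L0=L0 false; RHS Lnn = L0 false
    · simp [hne]
  have h2 : μ.filter (fun q => L n n = q) = replicate (μ.count (L n n)) (L n n) :=
    Multiset.filter_eq μ (L n n)
  have hμ : μ = replicate (μ.count (L n 0)) (L n 0) + replicate (μ.count (L n n)) (L n n) := by
    conv_lhs => rw [← hsplit]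
    rw [h1, hcong, h2]
  have hcardcnt : Multiset.card μ = μ.count (L n 0) + μ.count (L n n) := by
    conv_lhs => rw [hμ]
    simp
  have : Multiset.card μ - μ.count (L n n) = μ.count (L n 0) := by omega
  rw [this]
  exact hμ

lemma collapse_aux (hn : 0 < n) : ∀ (N : ℕ) (μ : Multiset (Fin (n+1))) (d : Fin n),
    mid n μ ≤ N →
    ∃ d', Reach (FilterT n) (μ, d)
      (replicate (Multiset.card μ - μ.count (L n n)) (L n 0)
        + replicate (μ.count (L n n)) (L n n), d') := by
  intro N
  induction N with
  | zero =>
    intro μ d hN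
    refine ⟨d, ?_⟩
    rw [← flat_eq hn μ (by omega)]
    exact .refl
  | succ N ih =>
    intro μ d hN
    by_cases h0 : mid n μ = 0
    · exact ⟨d, by rw [← flat_eq hn μ h0]; exact .refl⟩
    · have hne : μ.filter (fun q => ¬ q = L n 0 ∧ ¬ q = L n n) ≠ 0 := by
        intro h; exact h0 (by simp [mid, h])
      obtain ⟨q, hqf⟩ := Multiset.exists_mem_of_ne_zero hne
      obtain ⟨hqμ, hq0, hqn⟩ := Multiset.mem_filter.mp hqf
      have hqval : (q : ℕ) ≤ n := by omega
      have hi1 : 1 ≤ (q : ℕ) := by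
        rcases Nat.eq_zero_or_pos (q : ℕ) with h | h
        · exact absurd (by ext; rw [h, L_val (Nat.zero_le n)] : q = L n 0) hq0
        · exact h
      have hi2 : (q : ℕ) ≤ n - 1 := by
        rcases Nat.lt_or_ge (q : ℕ) n with h | h
        · omega
        · exact absurd (by ext; rw [L_val le_rfl]; omega : q = L n n) hqn
      have hqL : q = L n (q : ℕ) := by ext; rw [L_val hqval]
      have hle : {q} ≤ μ := Multiset.singleton_le.2 hqμ
      have hsp : {q} + (μ - {q}) = μ := by
        exact (add_comm _ _).trans (tsub_add_cancel_of_le hle)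
      set ν := {L n 0} + (μ - {q}) with hνdef
      have hstep : IsStep (FilterT n) (μ, d) (ν, Rg n hn (q : ℕ)) := by
        have hstep0 := step_wi hn hi1 hi2 (μ - {q}) d
        have e1 : ({L n (q : ℕ)} : Multiset (Fin (n+1))) = {q} :=
          congrArg (fun x => ({x} : Multiset (Fin (n+1)))) hqL.symm
        have e : {L n (q : ℕ)} + (μ - {q}) = μ := by rw [e1]; exact hsp
        rw [e] at hstep0
        exact hstep0
      -- mid decreases
      have hpredq : (¬ q = L n 0 ∧ ¬ q = L n n) := ⟨hq0, hqn⟩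
      have hmidμ : mid n μ = 1 + mid n (μ - {q}) := by
        conv_lhs => rw [mid, ← hsp]
        rw [Multiset.filter_add, Multiset.filter_singleton, if_pos hpredq]
        simp [mid]
        omega
      have hmidν : mid n ν ≤ N := by
        have : mid n ν = mid n (μ - {q}) := by
          rw [mid, hνdef, Multiset.filter_add, Multiset.filter_singleton]
          rw [if_neg (by simp : ¬ (¬ L n 0 = L n 0 ∧ ¬ L n 0 = L n n))]
          simp [mid]
        omega
      -- counts
      have hL0n : ¬ (L n n = L n 0) := by
        intro h
        have := congrArg Fin.val h
        rw [L_val (Nat.zero_le n), L_val le_rfl] at this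
        omega
      have hqnn : ¬ (L n n = q) := fun h => hqn h.symm
      have hcount : ν.count (L n n) = μ.count (L n n) := by
        rw [hνdef, Multiset.count_add, Multiset.count_singleton, if_neg hL0n]
        conv_rhs => rw [← hsp]
        rw [Multiset.count_add, Multiset.count_singleton, if_neg hqnn]
      have hcard : Multiset.card ν = Multiset.card μ := by
        rw [hνdef, Multiset.card_add]
        conv_rhs => rw [← hsp]
        rw [Multiset.card_add]
        simp
      obtain ⟨d', hr⟩ := ih ν (Rg n hn (q : ℕ)) hmidν
      rw [hcount, hcard] at hr
      exact ⟨d', Relation.ReflTransGen.head hstep hr⟩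

end S14
namespace S14
open Multiset

variable {n : ℕ}

/-- number of processes strictly below location `j` -/
def Blo (n : ℕ) (μ : Multiset (Fin (n+1))) (j : ℕ) : ℕ :=
  Multiset.card (μ.filter (fun q : Fin (n+1) => (q : ℕ) < j))

/-- The inductive invariant of the filter protocol. -/
def Inv (n m : ℕ) (γ : Multiset (Fin (n+1)) × Fin n) : Prop :=
  Multiset.card γ.1 = m ∧
  ∀ j, 1 ≤ j → j ≤ n → j - 1 + (if j ≤ (γ.2 : ℕ) then 1 else 0) ≤ Blo n γ.1 j

lemma Blo_add (μ ν : Multiset (Fin (n+1))) (j : ℕ) :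
    Blo n (μ + ν) j = Blo n μ j + Blo n ν j := by
  simp [Blo, Multiset.filter_add]

lemma Blo_singleton (a : Fin (n+1)) (j : ℕ) :
    Blo n {a} j = if (a : ℕ) < j then 1 else 0 := by
  rw [Blo, Multiset.filter_singleton]
  split_ifs <;> simp

lemma Blo_mono (μ : Multiset (Fin (n+1))) {i j : ℕ} (h : i ≤ j) :
    Blo n μ i ≤ Blo n μ j := by
  apply Multiset.card_le_card
  apply Multiset.monotone_filter_right
  intro x hx
  omega

lemma inv_step (hn : 0 < n) {m : ℕ} {γ γ' : Multiset (Fin (n+1)) × Fin n}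
    (hI : Inv n m γ) (hs : IsStep (FilterT n) γ γ') : Inv n m γ' := by
  obtain ⟨q, op, d'', q', hT, hq, hμ, hop⟩ := hs
  have hle : {q} ≤ γ.1 := Multiset.singleton_le.2 hq
  have hsplit : γ.1 = γ.1 - {q} + {q} := (tsub_add_cancel_of_le hle).symm
  set ν := γ.1 - {q} with hν
  have hcard : Multiset.card ν + 1 = m := by
    have h := hI.1
    rw [hsplit] at h
    simpa using h
  have hBγ : ∀ j, Blo n γ.1 j = Blo n ν j + (if (q : ℕ) < j then 1 else 0) := by
    intro j
    conv_lhs => rw [hsplit]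
    rw [Blo_add, Blo_singleton]
  have hBγ' : ∀ j, Blo n γ'.1 j = Blo n ν j + (if (q' : ℕ) < j then 1 else 0) := by
    intro j
    rw [hμ, Blo_add, Blo_singleton]
  have hcard' : Multiset.card γ'.1 = m := by
    rw [hμ]
    simpa using hcard
  refine ⟨hcard', ?_⟩
  intro j hj1 hjn
  have h1 := hI.2 j hj1 hjn
  rw [hBγ j] at h1
  rw [hBγ' j]
  cases op with
  | W =>
    have hd' : γ'.2 = d'' := by
      rcases hop with ⟨h, _⟩ | ⟨_, h⟩
      · exact absurd h (by simp)
      · exact h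
    have hreg' : (γ'.2 : ℕ) = (d'' : ℕ) := congrArg Fin.val hd'
    have hT' : ((q : ℕ) = 0 ∧ ((d'' : ℕ)) = 0 ∧ ((q' : ℕ)) = 0) ∨
        (1 ≤ (q : ℕ) ∧ (q : ℕ) ≤ n - 1 ∧ ((d'' : ℕ)) = (q : ℕ) ∧ ((q' : ℕ)) = 0) := hT
    rcases hT' with ⟨hq0, hd0, hq'0⟩ | ⟨hq1, hq2, hdq, hq'0⟩
    · split_ifs at h1 ⊢ <;> omega
    · split_ifs at h1 ⊢ <;> omega
  | R =>
    have hdd : γ.2 = d'' ∧ γ'.2 = d'' := by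
      rcases hop with ⟨_, h⟩ | ⟨h, _⟩
      · exact h
      · exact absurd h (by simp)
    have hreg' : (γ'.2 : ℕ) = (γ.2 : ℕ) := by rw [hdd.2, hdd.1]
    have hregd : (γ.2 : ℕ) = (d'' : ℕ) := congrArg Fin.val hdd.1
    have hT' : ((q : ℕ) ≤ n - 1 ∧ ((d'' : ℕ)) = (q : ℕ) ∧ ((q' : ℕ)) = (q : ℕ) + 1) ∨
        (¬ ((q : ℕ) ≤ n - 1 ∧ ((d'' : ℕ)) = (q : ℕ)) ∧ q' = q) := hT
    rcases hT' with ⟨hq2, hdq, hq'val⟩ | ⟨_, hq'q⟩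
    · by_cases hji : j = (q : ℕ) + 1
      · subst hji
        by_cases hi1 : 1 ≤ (q : ℕ)
        · have hIi := hI.2 (q : ℕ) hi1 (by omega)
          rw [hBγ (q : ℕ)] at hIi
          have hmono : Blo n ν (q : ℕ) ≤ Blo n ν ((q : ℕ) + 1) :=
            Blo_mono ν (Nat.le_succ _)
          split_ifs at h1 hIi ⊢ <;> omega
        · split_ifs at h1 ⊢ <;> omega
      · split_ifs at h1 ⊢ <;> omega
    · have hq'e : (q' : ℕ) = (q : ℕ) := congrArg Fin.val hq'q
      split_ifs at h1 ⊢ <;> omega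

lemma inv_reach (hn : 0 < n) {m : ℕ} {γ γ' : Multiset (Fin (n+1)) × Fin n}
    (hr : Reach (FilterT n) γ γ') (hI : Inv n m γ) : Inv n m γ' := by
  induction hr with
  | refl => exact hI
  | tail _ hstep ih => exact inv_step hn ih hstep

lemma inv_init (hn : 0 < n) (m : ℕ) (hm : n ≤ m) :
    Inv n m (replicate m (L n 0), Rg n hn 0) := by
  constructor
  · simp
  · intro j hj1 hjn
    have hB : Blo n (replicate m (L n 0)) j = m := by
      rw [Blo, Multiset.filter_eq_self.mpr, Multiset.card_replicate]
      intro a ha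
      have := Multiset.eq_of_mem_replicate ha
      subst this
      rw [L_val (Nat.zero_le n)]
      omega
    rw [hB]
    have hr0 : (Rg n hn 0 : ℕ) = 0 := Rg_val (Nat.zero_le _)
    rw [hr0]
    split_ifs <;> omega

lemma count_last_le (hn : 0 < n) {m : ℕ} {γ : Multiset (Fin (n+1)) × Fin n}
    (hI : Inv n m γ) (hm : n ≤ m) : γ.1.count (L n n) ≤ m - n + 1 := by
  have h1 := hI.2 n hn le_rfl
  have hBlo : n - 1 ≤ Blo n γ.1 n := le_trans (Nat.le_add_right _ _) h1
  have hpart : Blo n γ.1 n + γ.1.count (L n n) = m := by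
    have hfc : γ.1.filter (fun q : Fin (n+1) => ¬ ((q : ℕ) < n)) = γ.1.filter (fun q : Fin (n+1) => L n n = q) := by
      apply Multiset.filter_congr
      intro x hx
      have hxlt : (x : ℕ) < n + 1 := x.isLt
      constructor
      · intro h
        ext
        rw [L_val le_rfl]
        omega
      · intro h
        rw [← h, L_val le_rfl]
        omega
    have hsum := Multiset.filter_add_not (fun q : Fin (n+1) => ((q : ℕ) < n)) γ.1
    have hcards := congrArg Multiset.card hsum
    rw [Multiset.card_add] at hcards
    rw [hfc] at hcards
    rw [← Multiset.count_eq_card_filter_eq] at hcards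
    rw [hI.1] at hcards
    exact hcards
  omega

end S14
namespace S14
open Multiset

variable {n : ℕ}

lemma main_reach (hn : 0 < n) (m : ℕ) (hm : n ≤ m) {γ : Multiset (Fin (n+1)) × Fin n}
    (hγ : γ ∈ PostStar (FilterT n) {(replicate m (L n 0), Rg n hn 0)}) :
    Reach (FilterT n) γ
      (replicate (n-1) (L n 0) + replicate (m-n+1) (L n n), Rg n hn (n-1)) := by
  obtain ⟨γ0, hγ0, hr⟩ := hγ
  rw [Set.mem_singleton_iff] at hγ0
  subst hγ0
  have hI : Inv n m γ := inv_reach hn hr (inv_init hn m hm)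
  obtain ⟨μ, d⟩ := γ
  have hble : μ.count (L n n) ≤ m - n + 1 := count_last_le hn hI hm
  have hcard : Multiset.card μ = m := hI.1
  obtain ⟨d', hcol⟩ := collapse_aux hn (mid n μ) μ d le_rfl
  rw [hcard] at hcol
  have hsplitnum : m - μ.count (L n n) = n - 1 + (m - n + 1 - μ.count (L n n)) := by omega
  rw [hsplitnum] at hcol
  have hmp := multipush hn (m - n + 1 - μ.count (L n n)) (replicate (μ.count (L n n)) (L n n)) d'
  have hfinal : replicate (m-n+1-μ.count (L n n)) (L n n) + replicate (μ.count (L n n)) (L n n)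
      = replicate (m-n+1) (L n n) := by
    rw [← Multiset.replicate_add]
    congr 1
    omega
  rw [hfinal] at hmp
  exact hcol.trans hmp

end S14

/-- for `m ≥ n`, every configuration reachable in `F_n` from
`⟨s_0^m, 0⟩` can reach `⟨s_0^{n−1} + s_n^{m−n+1}, n−1⟩`; in particular
`Post*({⟨s_0^m, 0⟩}) ⊆ Pre*([s_n])`. -/
theorem stmt_14 (n : ℕ) (hn : 0 < n) (m : ℕ) (hm : n ≤ m) :
    (∀ γ ∈ PostStar (FilterT n)
        {(Multiset.replicate m (⟨0, by omega⟩ : Fin (n + 1)), (⟨0, hn⟩ : Fin n))},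
      Reach (FilterT n) γ
        (Multiset.replicate (n - 1) (⟨0, by omega⟩ : Fin (n + 1)) +
           Multiset.replicate (m - n + 1) (Fin.last n),
         (⟨n - 1, by omega⟩ : Fin n))) ∧
    PostStar (FilterT n)
        {(Multiset.replicate m (⟨0, by omega⟩ : Fin (n + 1)), (⟨0, hn⟩ : Fin n))} ⊆
      PreStar (FilterT n) (TargetSet (Fin.last n)) := by
  simp only [S14.mk_eq_L, S14.mk_eq_Rg hn, S14.last_eq_L]
  have hne : S14.L n n ≠ S14.L n 0 := by
    intro h
    have := congrArg Fin.val h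
    rw [S14.L_val le_rfl, S14.L_val (Nat.zero_le n)] at this
    omega
  constructor
  · exact fun γ hγ => S14.main_reach hn m hm hγ
  · intro γ hγ
    refine ⟨(Multiset.replicate (n-1) (S14.L n 0) + Multiset.replicate (m-n+1) (S14.L n n),
      S14.Rg n hn (n-1)), ?_, S14.main_reach hn m hm hγ⟩
    show 0 < Multiset.count (S14.L n n) _
    rw [Multiset.count_add, Multiset.count_replicate, Multiset.count_replicate]
    rw [if_neg (fun h => hne h.symm), if_pos rfl]
    omega
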